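/- Let λ, f_0, r, r̄, s be complex numbers with λ ≠ 0, λ² f_0² = 9(1/λ + 2), r + r̄ = 5 and r·r̄ = 12 + 6/λ. Let A(s) be the 4×4 complex matrix with rows (s−2, −1, 0, 0), (−6, s−3, 2λf_0, 0), (0, 0, s−2, −1), (2λf_0, 0, 6/λ, s−3); let P be the 4×4 matrix with rows (−λf_0, −λf_0, λf_0, λf_0), (3λf_0, −4λf_0, λf_0(r−2), λf_0(r̄−2)), (3, 3, 3(2+1/λ), 3(2+1/λ)), (−9, 12, 3(2+1/λ)(r−2), 3(2+1/λ)(r̄−2)); and let D(s) be the diagonal matrix with diagonal entries s+1, s−6, s−r, s−r̄. Then A(s)·P = P·D(s). -/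

import Mathlib

/-- Simultaneous diagonalization (2.14)–(2.15)/(3.10)–(3.11) of the paper: with
`λ² f₀² = 9(1/λ + 2)`, `r + r̄ = 5`, `r·r̄ = 12 + 6/λ`, the columns of `P` are
eigenvectors of `A(s)` for the eigenvalues `s+1, s−6, s−r, s−r̄`, i.e. `A(s)·P = P·D(s)`. -/
theorem diagonalization_case_i (lam f0 r rbar s : ℂ) (hlam : lam ≠ 0)
    (hf0 : lam ^ 2 * f0 ^ 2 = 9 * (1 / lam + 2))
    (hsum : r + rbar = 5) (hprod : r * rbar = 12 + 6 / lam) :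
    (!![s - 2, -1, 0, 0;
        -6, s - 3, 2 * lam * f0, 0;
        0, 0, s - 2, -1;
        2 * lam * f0, 0, 6 / lam, s - 3] : Matrix (Fin 4) (Fin 4) ℂ) *
      !![-(lam * f0), -(lam * f0), lam * f0, lam * f0;
         3 * lam * f0, -4 * lam * f0, lam * f0 * (r - 2), lam * f0 * (rbar - 2);
         3, 3, 3 * (2 + 1 / lam), 3 * (2 + 1 / lam);
         -9, 12, 3 * (2 + 1 / lam) * (r - 2), 3 * (2 + 1 / lam) * (rbar - 2)] =
    !![-(lam * f0), -(lam * f0), lam * f0, lam * f0;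
       3 * lam * f0, -4 * lam * f0, lam * f0 * (r - 2), lam * f0 * (rbar - 2);
       3, 3, 3 * (2 + 1 / lam), 3 * (2 + 1 / lam);
       -9, 12, 3 * (2 + 1 / lam) * (r - 2), 3 * (2 + 1 / lam) * (rbar - 2)] *
      Matrix.diagonal ![s + 1, s - 6, s - r, s - rbar] := by
  have hrb : rbar = 5 - r := by linear_combination hsum
  subst hrb
  have hf0' : lam ^ 3 * f0 ^ 2 = 9 + 18 * lam := by
    field_simp at hf0
    linear_combination hf0
  have hp : lam * (r * (5 - r)) = 12 * lam + 6 := by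
    field_simp at hprod
    linear_combination hprod
  ext i j
  fin_cases i <;> fin_cases j <;>
    simp [Matrix.mul_apply, Fin.sum_univ_four, Matrix.diagonal] <;>
    (try field_simp) <;>
    first
    | ring1
    | linear_combination (-2 : ℂ) * hf0'
    | linear_combination (-(lam * f0)) * hp
    | linear_combination (2 * lam ^ 3) * hf0' + (-3 * lam ^ 2 - 6 * lam ^ 3) * hp
    | linear_combination (-f0) * hp
    | linear_combination (2 * lam) * hf0' + (-3 - 6 * lam) * hp
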